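/- Let f : ℤ → ℤ be a bi-Lipschitz bijection with C = Lip(f)·Lip(f⁻¹), and suppose f((-∞, x]) ⊆ (-∞, f(x) + C/2] and (-∞, f(x) - C/2] ⊆ f((-∞, x]) for all x ∈ ℤ. Then for all x₁ < x₂ with x₂ - x₁ > C, one has f(x₂) - f(x₁) - C ≤ x₂ - x₁ ≤ f(x₂) - f(x₁) + C. -/

import Mathlib

/-- In the orientation-preserving case of the structure lemma,
f is an approximate translation on pairs at distance more than C. -/
theorem biLipschitz_approx_translation
    (f g : ℤ → ℤ) (hfg : Function.LeftInverse g f) (hgf : Function.RightInverse g f)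
    (K L : ℤ)
    (hLip : ∀ x y : ℤ, |f x - f y| ≤ K * |x - y|)
    (hLipInv : ∀ u v : ℤ, |g u - g v| ≤ L * |u - v|)
    (C : ℤ) (hC : C = K * L)
    (hUpper : ∀ x : ℤ, f '' {z : ℤ | z ≤ x} ⊆ {n : ℤ | 2 * n ≤ 2 * f x + C})
    (hLower : ∀ x : ℤ, {n : ℤ | 2 * n ≤ 2 * f x - C} ⊆ f '' {z : ℤ | z ≤ x}) :
    ∀ x₁ x₂ : ℤ, x₁ < x₂ → C < x₂ - x₁ →
      f x₂ - f x₁ - C ≤ x₂ - x₁ ∧ x₂ - x₁ ≤ f x₂ - f x₁ + C := by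
  intro x₁ x₂ hx hCx
  have hfinj : Function.Injective f := hfg.injective
  have hginj : Function.Injective g := hgf.injective
  constructor
  · -- lower bound : f x₂ - f x₁ - C ≤ x₂ - x₁
    -- the set U of n with 2*f x₁ + C < 2n ≤ 2*f x₂ - C injects via g into Ioc x₁ x₂
    set a : ℤ := 2 * f x₁ + C with ha
    set b : ℤ := 2 * f x₂ - C with hb
    have key : (Finset.Ioc (a / 2) (b / 2)).card ≤ (Finset.Ioc x₁ x₂).card := by
      apply Finset.card_le_card_of_injOn g
      · intro n hn
        simp only [Finset.mem_coe, Finset.mem_Ioc] at hn ⊢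
        have h1 : a < 2 * n := by omega
        have h2 : 2 * n ≤ b := by omega
        -- n is in the image of (-∞, x₂]
        obtain ⟨z, hz, hzn⟩ := hLower x₂ (by simpa using (by omega : 2 * n ≤ 2 * f x₂ - C))
        simp only [Set.mem_setOf_eq] at hz
        have hgz : g n = z := by rw [← hzn, hfg]
        constructor
        · -- g n > x₁ : otherwise n ∈ f '' (-∞, x₁]
          by_contra hle
          push_neg at hle
          have : n ∈ {m : ℤ | 2 * m ≤ 2 * f x₁ + C} := by
            apply hUpper x₁
            exact ⟨z, show z ≤ x₁ by omega, hzn⟩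
          simp only [Set.mem_setOf_eq] at this
          omega
        · omega
      · intro u _ v _ h
        exact hginj h
    rw [Int.card_Ioc, Int.card_Ioc] at key
    omega
  · -- upper bound : x₂ - x₁ ≤ f x₂ - f x₁ + C
    set a : ℤ := 2 * f x₁ - C with ha
    set b : ℤ := 2 * f x₂ + C with hb
    have key : (Finset.Ioc x₁ x₂).card ≤ (Finset.Ioc (a / 2) (b / 2)).card := by
      apply Finset.card_le_card_of_injOn f
      · intro z hz
        simp only [Finset.mem_coe, Finset.mem_Ioc] at hz ⊢
        have h2 : 2 * f z ≤ 2 * f x₂ + C := hUpper x₂ ⟨z, hz.2, rfl⟩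
        have h1 : 2 * f x₁ - C < 2 * f z := by
          by_contra hle
          push_neg at hle
          obtain ⟨w, hw, hwz⟩ := hLower x₁ hle
          have hwz' : w = z := hfinj hwz
          simp only [Set.mem_setOf_eq] at hw
          omega
        omega
      · intro u _ v _ h
        exact hfinj h
    rw [Int.card_Ioc, Int.card_Ioc] at key
    omega
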